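/- For all integers 2 ≤ ℓ < k and every real number p with (ℓ/k)^{1/ℓ} ≤ p ≤ 1, one has (k·p^ℓ/ℓ)·∑_{t=0}^{ℓ} (ℓ+1−t)·C(k,t)·p^t·(1−p)^{k−t} < 1; equivalently, U_{k,ℓ,p}(ℓ+1) > ℓ. -/

import Mathlib

open Finset

-- combinatorial lemma C1 base: k^2 * C(k,l) ≤ l^2 * 4^l * C(k,2l)  for k ≥ 2l+1
theorem two_pow_le_factorial {d : ℕ} (hd : 4 ≤ d) : 2^d ≤ d.factorial := by
  induction d with
  | zero => omega
  | succ n ih =>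
    rcases Nat.lt_or_ge n 4 with h | h
    · interval_cases n <;> simp [Nat.factorial] <;> omega
    · rw [pow_succ, Nat.factorial_succ]
      calc 2^n * 2 ≤ n.factorial * 2 := by exact Nat.mul_le_mul_right _ (ih h)
        _ ≤ (n+1) * n.factorial := by rw [Nat.mul_comm]; exact Nat.mul_le_mul_right _ (by omega)

theorem C1base {ℓ : ℕ} (hℓ : 2 ≤ ℓ) : ∀ k, 2*ℓ+1 ≤ k → k^2 * k.choose ℓ ≤ ℓ^2 * 4^ℓ * k.choose (2*ℓ) := by
  intro k hk
  induction k, hk using Nat.le_induction with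
  | base =>
    have h1 : (2*ℓ+1).choose (2*ℓ) = 2*ℓ+1 := by
      rw [← Nat.choose_symm (by omega)]
      simp
    rw [h1]
    have h2 : (2*ℓ+1).choose ℓ ≤ 4^ℓ := Nat.choose_middle_le_pow ℓ
    rcases Nat.lt_or_ge ℓ 3 with h3 | h3
    · interval_cases ℓ
      decide
    · have : 2*ℓ+1 ≤ ℓ^2 := by nlinarith
      calc (2*ℓ+1)^2 * (2*ℓ+1).choose ℓ = (2*ℓ+1) * ((2*ℓ+1) * (2*ℓ+1).choose ℓ) := by ring
        _ ≤ (2*ℓ+1) * (ℓ^2 * 4^ℓ) := by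
            exact Nat.mul_le_mul_left _ (Nat.mul_le_mul this h2)
        _ = ℓ^2 * 4^ℓ * (2*ℓ+1) := by ring
  | succ k hk ih =>
    -- goal: (k+1)^2 * (k+1).choose ℓ ≤ ℓ^2*4^ℓ*(k+1).choose (2*ℓ)
    have hc1 : k.choose ℓ * (k+1) = (k+1).choose ℓ * (k+1-ℓ) := Nat.choose_mul_succ_eq k ℓ
    have hc2 : k.choose (2*ℓ) * (k+1) = (k+1).choose (2*ℓ) * (k+1-2*ℓ) := Nat.choose_mul_succ_eq k (2*ℓ)
    have hpos : 0 < (k+1-ℓ) * (k+1-2*ℓ) * (k+1) := by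
      have : 0 < k+1-ℓ := by omega
      have : 0 < k+1-2*ℓ := by omega
      positivity
    refine Nat.le_of_mul_le_mul_right ?_ hpos
    calc (k+1)^2 * (k+1).choose ℓ * ((k+1-ℓ) * (k+1-2*ℓ) * (k+1))
          = (k+1)^2 * ((k+1).choose ℓ * (k+1-ℓ)) * (k+1-2*ℓ) * (k+1) := by ring
        _ = (k+1)^2 * (k.choose ℓ * (k+1)) * (k+1-2*ℓ) * (k+1) := by rw [hc1]
        _ = ((k+1)^2 * (k+1-2*ℓ)) * k.choose ℓ * ((k+1) * (k+1)) := by ring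
        _ ≤ (k^2 * (k+1-ℓ)) * k.choose ℓ * ((k+1) * (k+1)) := by
            have hpoly : (k+1)^2 * (k+1-2*ℓ) ≤ k^2 * (k+1-ℓ) := by
              have h1 : 2*ℓ ≤ k+1 := by omega
              have h2 : ℓ ≤ k+1 := by omega
              zify [h1, h2]
              nlinarith [sq_nonneg (k:ℤ), hℓ, hk]
            exact Nat.mul_le_mul_right _ (Nat.mul_le_mul_right _ hpoly)
        _ = (k^2 * k.choose ℓ) * (k+1) * (k+1) * (k+1-ℓ) := by ring
        _ ≤ (ℓ^2 * 4^ℓ * k.choose (2*ℓ)) * (k+1) * (k+1) * (k+1-ℓ) := by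
            exact Nat.mul_le_mul_right _ (Nat.mul_le_mul_right _ (Nat.mul_le_mul_right _ ih))
        _ = ℓ^2 * 4^ℓ * (k.choose (2*ℓ) * (k+1)) * (k+1) * (k+1-ℓ) := by ring
        _ = ℓ^2 * 4^ℓ * ((k+1).choose (2*ℓ) * (k+1-2*ℓ)) * (k+1) * (k+1-ℓ) := by rw [hc2]
        _ = ℓ^2 * 4^ℓ * (k+1).choose (2*ℓ) * ((k+1-ℓ) * (k+1-2*ℓ) * (k+1)) := by ring

theorem C1step {k ℓ t : ℕ} (hk : 2*ℓ+1 ≤ k) (ht : t < ℓ)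
    (ih : (ℓ-t) * k^2 * k.choose (t+1) ≤ ℓ^2 * 4^ℓ * k.choose (ℓ+(t+1))) :
    (ℓ+1-t) * k^2 * k.choose t ≤ ℓ^2 * 4^ℓ * k.choose (ℓ+t) := by
  -- identities
  have hc1 : k.choose (t+1) * (t+1) = k.choose t * (k-t) := Nat.choose_succ_right_eq k t
  have hc2 : k.choose (ℓ+t+1) * (ℓ+t+1) = k.choose (ℓ+t) * (k-(ℓ+t)) := Nat.choose_succ_right_eq k (ℓ+t)
  have hpos : 0 < (t+1) * (k-(ℓ+t)) := by
    have : 0 < k - (ℓ+t) := by omega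
    positivity
  refine Nat.le_of_mul_le_mul_right ?_ hpos
  have hab : (ℓ+1-t)*(t+1) ≤ (ℓ-t)*(ℓ+t+1) := by
    rcases Nat.exists_eq_add_of_le (Nat.succ_le_of_lt ht) with ⟨a, ha⟩
    -- ℓ = t+1+a
    have h1 : ℓ+1-t = a+2 := by omega
    have h2 : ℓ-t = a+1 := by omega
    rw [h1, h2, ha]
    nlinarith [Nat.zero_le a, Nat.zero_le t]
  calc (ℓ+1-t) * k^2 * k.choose t * ((t+1) * (k-(ℓ+t)))
      ≤ (ℓ+1-t) * k^2 * k.choose t * ((t+1) * (k-t)) := by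
        have : k-(ℓ+t) ≤ k-t := by omega
        exact Nat.mul_le_mul_left _ (Nat.mul_le_mul_left _ this)
    _ = ((ℓ+1-t)*(t+1)) * k^2 * (k.choose t * (k-t)) := by ring
    _ ≤ ((ℓ-t)*(ℓ+t+1)) * k^2 * (k.choose t * (k-t)) := by
        exact Nat.mul_le_mul_right _ (Nat.mul_le_mul_right _ hab)
    _ = ((ℓ-t)*(ℓ+t+1)) * k^2 * (k.choose (t+1) * (t+1)) := by rw [hc1]
    _ = ((ℓ-t) * k^2 * k.choose (t+1)) * ((ℓ+t+1) * (t+1)) := by ring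
    _ ≤ (ℓ^2 * 4^ℓ * k.choose (ℓ+(t+1))) * ((ℓ+t+1) * (t+1)) := by
        exact Nat.mul_le_mul_right _ ih
    _ = ℓ^2 * 4^ℓ * (k.choose (ℓ+t+1) * (ℓ+t+1)) * (t+1) := by
        have : ℓ+(t+1) = ℓ+t+1 := by omega
        rw [this]; ring
    _ = ℓ^2 * 4^ℓ * (k.choose (ℓ+t) * (k-(ℓ+t))) * (t+1) := by rw [hc2]
    _ = ℓ^2 * 4^ℓ * k.choose (ℓ+t) * ((t+1) * (k-(ℓ+t))) := by ring

theorem C1 {k ℓ : ℕ} (hℓ : 2 ≤ ℓ) (hk : 2*ℓ+1 ≤ k) :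
    ∀ t, t ≤ ℓ → (ℓ+1-t) * k^2 * k.choose t ≤ ℓ^2 * 4^ℓ * k.choose (ℓ+t) := by
  have aux : ∀ j t, t + j = ℓ → (ℓ+1-t) * k^2 * k.choose t ≤ ℓ^2 * 4^ℓ * k.choose (ℓ+t) := by
    intro j
    induction j with
    | zero =>
      intro t htl
      have h1 : t = ℓ := by omega
      rw [h1]
      have h2 : ℓ+1-ℓ = 1 := by omega
      have h3 : ℓ+ℓ = 2*ℓ := by omega
      rw [h2, h3, one_mul]
      exact C1base hℓ k hk
    | succ j ihj =>
      intro t htl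
      have ht : t < ℓ := by omega
      exact C1step hk ht (by
        have := ihj (t+1) (by omega)
        have he : ℓ - t = ℓ+1-(t+1) := by omega
        rw [he]
        exact this)
  intro t htl
  exact aux (ℓ - t) t (by omega)

theorem C2claim {ℓ d t : ℕ} (ht : t ≤ ℓ) (hd : 1 ≤ d) :
    (ℓ+1-t) * (ℓ+d).choose t ≤ (ℓ+d).choose ℓ * (ℓ+d).choose (t+d) := by
  obtain ⟨a, ha⟩ := Nat.exists_eq_add_of_le ht   -- ℓ = t + a
  have hid : (ℓ+d).choose (t+d) * (t+d).choose t = (ℓ+d).choose t * (a+d).choose d := by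
    have h := Nat.choose_mul (n := ℓ+d) (show t ≤ t+d by omega)
    have e1 : ℓ+d-t = a+d := by omega
    have e2 : t+d-t = d := by omega
    rw [e1, e2] at h
    exact h
  have hA : a+1 ≤ (a+d).choose d := by
    have h1 : (a+d).choose (a+d-d) = (a+d).choose d := Nat.choose_symm (by omega)
    have e : a+d-d = a := by omega
    rw [e] at h1
    have h2 : (a+1).choose a ≤ (a+d).choose a := Nat.choose_le_choose a (by omega)
    have h3 : (a+1).choose a = a+1 := by
      have := Nat.choose_symm (show a ≤ a+1 by omega)
      have e2 : a+1-a = 1 := by omega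
      rw [e2] at this
      rw [← this, Nat.choose_one_right]
    omega
  have hB : (t+d).choose t ≤ (ℓ+d).choose ℓ := by
    have h1 : (t+d).choose (t+d-t) = (t+d).choose t := Nat.choose_symm (by omega)
    have e1 : t+d-t = d := by omega
    rw [e1] at h1
    have h2 : (t+d).choose d ≤ (ℓ+d).choose d := Nat.choose_le_choose d (by omega)
    have h3 : (ℓ+d).choose (ℓ+d-d) = (ℓ+d).choose d := Nat.choose_symm (by omega)
    have e2 : ℓ+d-d = ℓ := by omega
    rw [e2] at h3
    omega
  have e3 : ℓ+1-t = a+1 := by omega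
  calc (ℓ+1-t) * (ℓ+d).choose t = (a+1) * (ℓ+d).choose t := by rw [e3]
    _ ≤ (a+d).choose d * (ℓ+d).choose t := Nat.mul_le_mul_right _ hA
    _ = (ℓ+d).choose t * (a+d).choose d := by ring
    _ = (ℓ+d).choose (t+d) * (t+d).choose t := hid.symm
    _ ≤ (ℓ+d).choose (t+d) * (ℓ+d).choose ℓ := Nat.mul_le_mul_left _ hB
    _ = (ℓ+d).choose ℓ * (ℓ+d).choose (t+d) := by ring

theorem C2base {ℓ d : ℕ} (hℓ : 2 ≤ ℓ) (hd : 1 ≤ d) (hdl : d ≤ ℓ) (hex : ¬(ℓ = 2 ∧ d = 2)) :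
    (ℓ+d).choose d * d^d ≤ ℓ^(2*d) := by
  rcases Nat.eq_or_lt_of_le hd with h1 | h1
  · -- d = 1
    rw [← h1]
    simp [Nat.choose_one_right]
    nlinarith
  by_cases h33 : ℓ = 3 ∧ d = 3
  · obtain ⟨e1, e2⟩ := h33; subst e1; subst e2; decide
  -- now d ≥ 2, not (2,2), not (3,3)
  have hd2 : 2 ≤ d := h1
  have h1' : (ℓ+d).choose d * d.factorial ≤ (2*ℓ)^d := by
    have ha : d.factorial * (ℓ+d).choose d = (ℓ+d).descFactorial d :=
      (Nat.descFactorial_eq_factorial_mul_choose _ _).symm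
    have hb : (ℓ+d).descFactorial d ≤ (ℓ+d)^d := Nat.descFactorial_le_pow _ _
    have hc : (ℓ+d)^d ≤ (2*ℓ)^d := Nat.pow_le_pow_left (by omega) d
    calc (ℓ+d).choose d * d.factorial = d.factorial * (ℓ+d).choose d := by ring
      _ = (ℓ+d).descFactorial d := ha
      _ ≤ (2*ℓ)^d := le_trans hb hc
  have h2' : 2^d * d^d ≤ ℓ^d * d.factorial := by
    rcases Nat.lt_or_ge d 4 with h4 | h4
    · interval_cases d
      · -- d = 2, ℓ ≥ 3
        have hl3 : 3 ≤ ℓ := by omega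
        have : 3^2 ≤ ℓ^2 := Nat.pow_le_pow_left hl3 2
        simp [Nat.factorial]
        nlinarith
      · -- d = 3, ℓ ≥ 4
        have hl4 : 4 ≤ ℓ := by omega
        have : 4^3 ≤ ℓ^3 := Nat.pow_le_pow_left hl4 3
        simp [Nat.factorial]
        nlinarith
    · have ha : 2^d ≤ d.factorial := two_pow_le_factorial h4
      have hb : d^d ≤ ℓ^d := Nat.pow_le_pow_left hdl d
      calc 2^d * d^d ≤ 2^d * ℓ^d := Nat.mul_le_mul_left _ hb
        _ ≤ d.factorial * ℓ^d := Nat.mul_le_mul_right _ ha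
        _ = ℓ^d * d.factorial := by ring
  have hpos : 0 < 2^d * d.factorial := by positivity
  refine Nat.le_of_mul_le_mul_right ?_ hpos
  calc (ℓ+d).choose d * d^d * (2^d * d.factorial)
      = ((ℓ+d).choose d * d.factorial) * (2^d * d^d) := by ring
    _ ≤ (2*ℓ)^d * (ℓ^d * d.factorial) := Nat.mul_le_mul h1' h2'
    _ = ℓ^(2*d) * (2^d * d.factorial) := by
        rw [mul_pow, two_mul d, pow_add]
        ring

theorem C2 {ℓ d t : ℕ} (hℓ : 2 ≤ ℓ) (hd : 1 ≤ d) (hdl : d ≤ ℓ) (hex : ¬(ℓ = 2 ∧ d = 2))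
    (ht : t ≤ ℓ) :
    (ℓ+1-t) * (ℓ+d).choose t * d^d ≤ ℓ^(2*d) * (ℓ+d).choose (t+d) := by
  have hsym : (ℓ+d).choose ℓ = (ℓ+d).choose d := by
    have h := Nat.choose_symm (show d ≤ ℓ+d by omega)
    have e : ℓ+d-d = ℓ := by omega
    rw [e] at h
    exact h
  calc (ℓ+1-t) * (ℓ+d).choose t * d^d
      ≤ (ℓ+d).choose ℓ * (ℓ+d).choose (t+d) * d^d :=
        Nat.mul_le_mul_right _ (C2claim ht hd)
    _ = ((ℓ+d).choose d * d^d) * (ℓ+d).choose (t+d) := by rw [hsym]; ring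
    _ ≤ ℓ^(2*d) * (ℓ+d).choose (t+d) :=
        Nat.mul_le_mul_right _ (C2base hℓ hd hdl hex)

theorem sum_shift_le {k ℓ s : ℕ} {p q : ℝ} (hp : 0 ≤ p) (hq : 0 ≤ q) (hpq : p + q = 1)
    (hs : 1 ≤ s) (hsk : ℓ + s ≤ k) :
    ∑ t ∈ range (ℓ+1), (k.choose (t+s) : ℝ) * p^(t+s) * q^(k-(t+s)) ≤ 1 - q^k := by
  set b : ℕ → ℝ := fun m => (k.choose m : ℝ) * p^m * q^(k-m) with hb
  have hbnn : ∀ m, 0 ≤ b m := fun m => by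
    simp only [hb]; positivity
  have hbin : ∑ m ∈ range (k+1), b m = 1 := by
    have h := add_pow p q k
    rw [hpq, one_pow] at h
    rw [h]
    apply Finset.sum_congr rfl
    intros m hm
    simp only [hb]; ring
  have himg : ∑ t ∈ range (ℓ+1), b (t+s) = ∑ m ∈ (range (ℓ+1)).image (· + s), b m := by
    rw [Finset.sum_image]
    intro x _ y _ h
    have h' : x + s = y + s := h
    omega
  have hsub : (range (ℓ+1)).image (· + s) ⊆ (range (k+1)).erase 0 := by
    intro m hm
    simp only [Finset.mem_image, Finset.mem_range] at hm
    obtain ⟨t, ht, rfl⟩ := hm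
    simp only [Finset.mem_erase, Finset.mem_range]
    omega
  have hle : ∑ m ∈ (range (ℓ+1)).image (· + s), b m ≤ ∑ m ∈ (range (k+1)).erase 0, b m :=
    Finset.sum_le_sum_of_subset_of_nonneg hsub (fun i _ _ => hbnn i)
  have herase : b 0 + ∑ m ∈ (range (k+1)).erase 0, b m = ∑ m ∈ range (k+1), b m :=
    Finset.add_sum_erase _ b (by simp)
  have hb0 : b 0 = q^k := by simp [hb]
  calc ∑ t ∈ range (ℓ+1), (k.choose (t+s) : ℝ) * p^(t+s) * q^(k-(t+s))
      = ∑ t ∈ range (ℓ+1), b (t+s) := rfl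
    _ = ∑ m ∈ (range (ℓ+1)).image (· + s), b m := himg
    _ ≤ ∑ m ∈ (range (k+1)).erase 0, b m := hle
    _ = 1 - q^k := by rw [← hbin, ← herase, hb0]; ring

theorem termA {k ℓ t : ℕ} {p q : ℝ} (hℓ : 2 ≤ ℓ) (hk : 2*ℓ+1 ≤ k) (ht : t ≤ ℓ)
    (hp : 0 < p) (hq : 0 ≤ q) (hpq : p + q = 1) (hpl : (ℓ:ℝ) ≤ k * p^ℓ) :
    ((ℓ+1-t : ℕ):ℝ) * k * k.choose t * p^(ℓ+t) * q^(k-t)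
      ≤ ℓ * ((k.choose (t+ℓ) : ℝ) * p^(t+ℓ) * q^(k-(t+ℓ))) := by
  have hq4 : q^ℓ * (ℓ * 4^ℓ) ≤ (k:ℝ) := by
    have h4pq : 0 ≤ 4*(p*q) ∧ 4*(p*q) ≤ 1 := by
      constructor
      · positivity
      · nlinarith [sq_nonneg (p-q)]
    have h1 : (4*(p*q))^ℓ ≤ 1 := pow_le_one₀ h4pq.1 h4pq.2
    have h2 : q^ℓ * (ℓ * 4^ℓ) * p^ℓ = (ℓ:ℝ) * (4*(p*q))^ℓ := by
      rw [mul_pow, mul_pow]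
      norm_num
      ring
    have h3 : q^ℓ * (ℓ * 4^ℓ) * p^ℓ ≤ (k:ℝ) * p^ℓ := by
      rw [h2]
      calc (ℓ:ℝ) * (4*(p*q))^ℓ ≤ (ℓ:ℝ) * 1 := by
            apply mul_le_mul_of_nonneg_left h1 (by positivity)
        _ = (ℓ:ℝ) := by ring
        _ ≤ k * p^ℓ := hpl
    exact le_of_mul_le_mul_right h3 (by positivity)
  have hC1 : ((ℓ+1-t : ℕ):ℝ) * k^2 * k.choose t ≤ (ℓ:ℝ)^2 * 4^ℓ * k.choose (ℓ+t) := by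
    have := C1 hℓ hk t ht
    have hcast : (((ℓ+1-t) * k^2 * k.choose t : ℕ) : ℝ) ≤ ((ℓ^2 * 4^ℓ * k.choose (ℓ+t) : ℕ) : ℝ) := Nat.cast_le.mpr this
    push_cast at hcast
    convert hcast using 2 <;> push_cast <;> ring
  -- main reduced inequality
  have hmain : ((ℓ+1-t : ℕ):ℝ) * k * k.choose t * q^ℓ ≤ ℓ * k.choose (t+ℓ) := by
    have hpos : (0:ℝ) < ℓ * 4^ℓ := by positivity
    refine le_of_mul_le_mul_right ?_ hpos
    calc ((ℓ+1-t : ℕ):ℝ) * k * k.choose t * q^ℓ * (ℓ * 4^ℓ)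
        = ((ℓ+1-t : ℕ):ℝ) * k * k.choose t * (q^ℓ * (ℓ * 4^ℓ)) := by ring
      _ ≤ ((ℓ+1-t : ℕ):ℝ) * k * k.choose t * k := by
          apply mul_le_mul_of_nonneg_left hq4 (by positivity)
      _ = ((ℓ+1-t : ℕ):ℝ) * k^2 * k.choose t := by ring
      _ ≤ (ℓ:ℝ)^2 * 4^ℓ * k.choose (ℓ+t) := hC1
      _ = ℓ * k.choose (t+ℓ) * (ℓ * 4^ℓ) := by rw [show ℓ+t = t+ℓ by omega]; ring
  -- exponent assembly
  have hep : p^(ℓ+t) = p^(t+ℓ) := by rw [show ℓ+t = t+ℓ by omega]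
  have heq : q^(k-t) = q^ℓ * q^(k-(t+ℓ)) := by
    rw [← pow_add]
    congr 1
    omega
  calc ((ℓ+1-t : ℕ):ℝ) * k * k.choose t * p^(ℓ+t) * q^(k-t)
      = (((ℓ+1-t : ℕ):ℝ) * k * k.choose t * q^ℓ) * (p^(t+ℓ) * q^(k-(t+ℓ))) := by
        rw [hep, heq]; ring
    _ ≤ (ℓ * k.choose (t+ℓ)) * (p^(t+ℓ) * q^(k-(t+ℓ))) := by
        apply mul_le_mul_of_nonneg_right hmain (by positivity)
    _ = ℓ * ((k.choose (t+ℓ) : ℝ) * p^(t+ℓ) * q^(k-(t+ℓ))) := by ring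

theorem keyB {k ℓ d : ℕ} {p q : ℝ} (hℓ : 2 ≤ ℓ) (hd : 1 ≤ d) (hdl : d ≤ ℓ) (hkd : k = ℓ + d)
    (hp : 0 < p) (hp2 : p ≤ 1) (hq : 0 ≤ q) (hpq : p + q = 1) (hpl : (ℓ:ℝ) ≤ k * p^ℓ) :
    (k:ℝ) * q^d * p^(ℓ-d) * (ℓ:ℝ)^(2*d-1) ≤ (d:ℝ)^d := by
  have hkpos : (0:ℝ) < k := by
    have : 0 < k := by omega
    exact_mod_cast this
  -- geometric sum bound: q * (ℓ * p^(ℓ-1)) ≤ 1 - p^ℓ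
  have hgeom : (1-p) * ∑ i ∈ range ℓ, p^i = 1 - p^ℓ := by
    have h := geom_sum_mul p ℓ
    linear_combination -h
  have hsum_ge : (ℓ:ℝ) * p^(ℓ-1) ≤ ∑ i ∈ range ℓ, p^i := by
    have h := Finset.card_nsmul_le_sum (range ℓ) (fun i => p^i) (p^(ℓ-1))
      (fun i hi => pow_le_pow_of_le_one hp.le hp2 (by
        simp only [Finset.mem_range] at hi
        omega))
    simpa [nsmul_eq_mul] using h
  have hq' : q = 1 - p := by linarith
  have hA : (k:ℝ) * (q * (ℓ * p^(ℓ-1))) ≤ (d:ℝ) := by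
    have h1 : q * (ℓ * p^(ℓ-1)) ≤ 1 - p^ℓ := by
      rw [hq', ← hgeom]
      apply mul_le_mul_of_nonneg_left hsum_ge (by linarith)
    have h2 : (k:ℝ) * (q * (ℓ * p^(ℓ-1))) ≤ k * (1 - p^ℓ) :=
      mul_le_mul_of_nonneg_left h1 hkpos.le
    have h3 : (k:ℝ) * (1 - p^ℓ) ≤ (d:ℝ) := by
      have hcast : (d:ℝ) = (k:ℝ) - ℓ := by
        rw [hkd]; push_cast; ring
      rw [hcast]
      nlinarith [hpl]
    linarith
  have hApow : ((k:ℝ) * (q * (ℓ * p^(ℓ-1))))^d ≤ (d:ℝ)^d := by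
    apply pow_le_pow_left₀ (by positivity) hA
  have hB : (ℓ:ℝ)^(d-1) ≤ ((k:ℝ) * p^ℓ)^(d-1) :=
    pow_le_pow_left₀ (by positivity) hpl (d-1)
  -- multiply target by (k*p^ℓ)^(d-1)
  have hpos2 : (0:ℝ) < ((k:ℝ) * p^ℓ)^(d-1) := by positivity
  refine le_of_mul_le_mul_right ?_ hpos2
  obtain ⟨d', rfl⟩ : ∃ d', d = d' + 1 := ⟨d-1, by omega⟩
  obtain ⟨a, ha⟩ : ∃ a, ℓ = a + (d'+1) := ⟨ℓ-(d'+1), by omega⟩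
  have e1 : ℓ - (d'+1) = a := by omega
  have e2 : (d'+1) - 1 = d' := by omega
  have e3 : 2*(d'+1) - 1 = 2*d'+1 := by omega
  have e4 : ℓ - 1 = a + d' := by omega
  rw [e1, e2, e3]
  rw [e4] at hApow
  rw [e2] at hB
  have hplrw : p^ℓ = p^(a+(d'+1)) := by rw [ha]
  rw [hplrw]
  have lhs_eq : (k:ℝ) * q^(d'+1) * p^a * (ℓ:ℝ)^(2*d'+1) * ((k:ℝ) * p^(a+(d'+1)))^d'
      = (ℓ:ℝ)^d' * ((k:ℝ) * (q * (ℓ * p^(a+d'))))^(d'+1) := by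
    ring
  rw [lhs_eq]
  calc (ℓ:ℝ)^d' * ((k:ℝ) * (q * (ℓ * p^(a+d'))))^(d'+1)
      ≤ (ℓ:ℝ)^d' * (d'+1:ℝ)^(d'+1) := by
        apply mul_le_mul_of_nonneg_left ?_ (by positivity)
        calc ((k:ℝ) * (q * (ℓ * p^(a+d'))))^(d'+1) ≤ (((d'+1:ℕ)):ℝ)^(d'+1) := hApow
          _ = ((d'+1:ℝ))^(d'+1) := by push_cast; ring
    _ ≤ ((k:ℝ) * p^(a+(d'+1)))^d' * (d'+1:ℝ)^(d'+1) := by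
        rw [← hplrw]
        apply mul_le_mul_of_nonneg_right hB (by positivity)
    _ = ((d'+1:ℕ):ℝ)^(d'+1) * ((k:ℝ)*p^(a+(d'+1)))^d' := by push_cast; ring

theorem termB {k ℓ d t : ℕ} {p q : ℝ} (hℓ : 2 ≤ ℓ) (hd : 1 ≤ d) (hdl : d ≤ ℓ) (hkd : k = ℓ + d)
    (hex : ¬(ℓ = 2 ∧ d = 2)) (ht : t ≤ ℓ)
    (hp : 0 < p) (hp2 : p ≤ 1) (hq : 0 ≤ q) (hpq : p + q = 1) (hpl : (ℓ:ℝ) ≤ k * p^ℓ) :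
    ((ℓ+1-t : ℕ):ℝ) * k * k.choose t * p^(ℓ+t) * q^(k-t)
      ≤ ℓ * ((k.choose (t+d) : ℝ) * p^(t+d) * q^(k-(t+d))) := by
  have hkey := keyB hℓ hd hdl hkd hp hp2 hq hpq hpl
  have hC2 := C2 hℓ hd hdl hex ht
  have hC2' : ((ℓ+1-t : ℕ):ℝ) * (k.choose t : ℝ) * (d:ℝ)^d ≤ (ℓ:ℝ)^(2*d) * (k.choose (t+d) : ℝ) := by
    have hcast : (((ℓ+1-t) * (ℓ+d).choose t * d^d : ℕ) : ℝ) ≤ ((ℓ^(2*d) * (ℓ+d).choose (t+d) : ℕ) : ℝ) :=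
      Nat.cast_le.mpr hC2
    push_cast at hcast
    rw [hkd]
    convert hcast using 2
  have hmain : ((ℓ+1-t : ℕ):ℝ) * k * k.choose t * (q^d * p^(ℓ-d)) ≤ ℓ * k.choose (t+d) := by
    have hlpos : (0:ℝ) < (ℓ:ℝ)^(2*d-1) := by
      have : (0:ℝ) < (ℓ:ℝ) := by exact_mod_cast (by omega : 0 < ℓ)
      positivity
    refine le_of_mul_le_mul_right ?_ hlpos
    calc ((ℓ+1-t : ℕ):ℝ) * k * k.choose t * (q^d * p^(ℓ-d)) * (ℓ:ℝ)^(2*d-1)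
        = ((ℓ+1-t : ℕ):ℝ) * (k.choose t : ℝ) * ((k:ℝ) * q^d * p^(ℓ-d) * (ℓ:ℝ)^(2*d-1)) := by ring
      _ ≤ ((ℓ+1-t : ℕ):ℝ) * (k.choose t : ℝ) * (d:ℝ)^d := by
          apply mul_le_mul_of_nonneg_left hkey (by positivity)
      _ ≤ (ℓ:ℝ)^(2*d) * (k.choose (t+d) : ℝ) := hC2'
      _ = ℓ * k.choose (t+d) * (ℓ:ℝ)^(2*d-1) := by
          have e : (ℓ:ℝ)^(2*d) = (ℓ:ℝ)^(2*d-1) * ℓ := by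
            rw [← pow_succ]
            congr 1
            omega
          rw [e]
          ring
  have hep : p^(ℓ+t) = p^(t+d) * p^(ℓ-d) := by
    rw [← pow_add]
    congr 1
    omega
  have heq : q^(k-t) = q^d * q^(k-(t+d)) := by
    rw [← pow_add]
    congr 1
    omega
  calc ((ℓ+1-t : ℕ):ℝ) * k * k.choose t * p^(ℓ+t) * q^(k-t)
      = (((ℓ+1-t : ℕ):ℝ) * k * k.choose t * (q^d * p^(ℓ-d))) * (p^(t+d) * q^(k-(t+d))) := by
        rw [hep, heq]; ring
    _ ≤ (ℓ * k.choose (t+d)) * (p^(t+d) * q^(k-(t+d))) := by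
        apply mul_le_mul_of_nonneg_right hmain (by positivity)
    _ = ℓ * ((k.choose (t+d) : ℝ) * p^(t+d) * q^(k-(t+d))) := by ring

theorem ex42 {p : ℝ} (hp : 0 < p) (hp2 : p ≤ 1) (hpl : (2:ℝ) ≤ 4 * p^2) :
    ∑ t ∈ range (2+1), ((2+1-t : ℕ):ℝ) * (4:ℕ) * (Nat.choose 4 t) * p^(2+t) * (1-p)^(4-t) < 2 := by
  rw [Finset.sum_range_succ, Finset.sum_range_succ, Finset.sum_range_succ, Finset.sum_range_zero]
  have hc : (Nat.choose 4 2) = 6 := by decide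
  rw [hc]
  norm_num
  have h1 : (1:ℝ)/2 ≤ p^2 := by linarith
  nlinarith [sq_nonneg (1-p), sq_nonneg p, sq_nonneg (p*(1-p)), sq_nonneg (p^2*(1-p)),
    mul_pos hp hp, pow_le_one₀ hp.le hp2 (n := 2), sq_nonneg ((1-p)*(1-p)),
    mul_nonneg (mul_nonneg hp.le hp.le) (sub_nonneg.mpr hp2)]

theorem keySum {k ℓ : ℕ} {p : ℝ} (hℓ : 2 ≤ ℓ) (hlk : ℓ < k)
    (hp : 0 < p) (hp2 : p ≤ 1) (hpl : (ℓ:ℝ) ≤ k * p^ℓ) :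
    ∑ t ∈ range (ℓ+1), ((ℓ+1-t : ℕ):ℝ) * k * k.choose t * p^(ℓ+t) * (1-p)^(k-t) < ℓ := by
  set q : ℝ := 1 - p with hqdef
  have hq : 0 ≤ q := by
    rw [hqdef]; linarith
  have hpq : p + q = 1 := by rw [hqdef]; ring
  have hl0 : (0:ℝ) < ℓ := by exact_mod_cast (by omega : 0 < ℓ)
  by_cases hq0 : q = 0
  · have hz : ∑ t ∈ range (ℓ+1), ((ℓ+1-t : ℕ):ℝ) * k * k.choose t * p^(ℓ+t) * q^(k-t) = 0 := by
      apply Finset.sum_eq_zero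
      intro t htm
      simp only [Finset.mem_range] at htm
      rw [hq0, zero_pow (by omega : k - t ≠ 0)]
      ring
    rw [hz]
    exact hl0
  have hqpos : 0 < q := lt_of_le_of_ne hq (Ne.symm hq0)
  have hqk : 0 < q^k := pow_pos hqpos k
  by_cases hcase : 2*ℓ+1 ≤ k
  · -- case A
    calc ∑ t ∈ range (ℓ+1), ((ℓ+1-t : ℕ):ℝ) * k * k.choose t * p^(ℓ+t) * q^(k-t)
        ≤ ∑ t ∈ range (ℓ+1), (ℓ:ℝ) * ((k.choose (t+ℓ) : ℝ) * p^(t+ℓ) * q^(k-(t+ℓ))) := by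
          apply Finset.sum_le_sum
          intro t htm
          simp only [Finset.mem_range] at htm
          exact termA hℓ hcase (by omega) hp hq hpq hpl
      _ = (ℓ:ℝ) * ∑ t ∈ range (ℓ+1), (k.choose (t+ℓ) : ℝ) * p^(t+ℓ) * q^(k-(t+ℓ)) := by
          rw [Finset.mul_sum]
      _ ≤ (ℓ:ℝ) * (1 - q^k) := by
          apply mul_le_mul_of_nonneg_left (sum_shift_le hp.le hq hpq (by omega) (by omega)) hl0.le
      _ < ℓ := by nlinarith
  · -- case B
    set d : ℕ := k - ℓ with hddef
    have hd : 1 ≤ d := by omega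
    have hdl : d ≤ ℓ := by omega
    have hkd : k = ℓ + d := by omega
    by_cases hex : ℓ = 2 ∧ d = 2
    · -- exceptional (k,ℓ) = (4,2)
      have hl2 : ℓ = 2 := hex.1
      have hk4 : k = 4 := by omega
      subst hl2; subst hk4
      have hpl' : (2:ℝ) ≤ 4 * p^2 := by exact_mod_cast hpl
      have := ex42 hp hp2 hpl'
      exact_mod_cast this
    calc ∑ t ∈ range (ℓ+1), ((ℓ+1-t : ℕ):ℝ) * k * k.choose t * p^(ℓ+t) * q^(k-t)
        ≤ ∑ t ∈ range (ℓ+1), (ℓ:ℝ) * ((k.choose (t+d) : ℝ) * p^(t+d) * q^(k-(t+d))) := by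
          apply Finset.sum_le_sum
          intro t htm
          simp only [Finset.mem_range] at htm
          exact termB hℓ hd hdl hkd hex (by omega) hp hp2 hq hpq hpl
      _ = (ℓ:ℝ) * ∑ t ∈ range (ℓ+1), (k.choose (t+d) : ℝ) * p^(t+d) * q^(k-(t+d)) := by
          rw [Finset.mul_sum]
      _ ≤ (ℓ:ℝ) * (1 - q^k) := by
          apply mul_le_mul_of_nonneg_left (sum_shift_le hp.le hq hpq hd (by omega)) hl0.le
      _ < ℓ := by nlinarith

noncomputable def Ufun (k ℓ : ℕ) (p : ℝ) (T : ℕ) : ℝ :=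
  (T : ℝ) - ((k : ℝ) / (ℓ : ℝ)) * ∑ t ∈ Finset.range (T + 1),
    ((T : ℝ) - (t : ℝ)) * (Nat.choose k t : ℝ) * p ^ (ℓ + t) * (1 - p) ^ (k - t)

theorem U_ell_plus_one_gt_ell (k ℓ : ℕ) (hℓ : 2 ≤ ℓ) (hℓk : ℓ < k)
    (p : ℝ) (hp1 : ((ℓ:ℝ) / (k:ℝ)) ^ (1 / (ℓ:ℝ)) ≤ p) (hp2 : p ≤ 1) :
    ((k:ℝ) * p ^ ℓ / (ℓ:ℝ)) * ∑ t ∈ Finset.range (ℓ + 1),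
        ((ℓ:ℝ) + 1 - (t:ℝ)) * (Nat.choose k t : ℝ) * p ^ t * (1 - p) ^ (k - t) < 1 ∧
    (ℓ:ℝ) < Ufun k ℓ p (ℓ + 1) := by
  have hl0 : (0:ℝ) < ℓ := by exact_mod_cast (by omega : 0 < ℓ)
  have hk0 : (0:ℝ) < k := by exact_mod_cast (by omega : 0 < k)
  have hbase : (0:ℝ) < (ℓ:ℝ)/k := div_pos hl0 hk0
  have hp : 0 < p := lt_of_lt_of_le (Real.rpow_pos_of_pos hbase _) hp1
  have hple : (ℓ:ℝ)/k ≤ p^ℓ := by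
    have h1 : (((ℓ:ℝ)/k) ^ (1/(ℓ:ℝ)))^ℓ ≤ p^ℓ :=
      pow_le_pow_left₀ (Real.rpow_nonneg hbase.le _) hp1 ℓ
    have h2 : (((ℓ:ℝ)/k) ^ (1/(ℓ:ℝ)))^ℓ = (ℓ:ℝ)/k := by
      rw [← Real.rpow_natCast (((ℓ:ℝ)/k) ^ (1/(ℓ:ℝ))) ℓ, ← Real.rpow_mul hbase.le,
        one_div, inv_mul_cancel₀ (by positivity : (ℓ:ℝ) ≠ 0), Real.rpow_one]
    linarith
  have hpl : (ℓ:ℝ) ≤ k * p^ℓ := by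
    rw [div_le_iff₀ hk0] at hple
    linarith [hple]
  have hsum := keySum hℓ hℓk hp hp2 hpl
  -- rewrite the target sum
  have hcast : ∀ t ∈ range (ℓ+1),
      ((k:ℝ) * p ^ ℓ / (ℓ:ℝ)) * (((ℓ:ℝ) + 1 - (t:ℝ)) * (Nat.choose k t : ℝ) * p ^ t * (1 - p) ^ (k - t))
      = (1/(ℓ:ℝ)) * (((ℓ+1-t : ℕ):ℝ) * k * k.choose t * p^(ℓ+t) * (1-p)^(k-t)) := by
    intro t htm
    simp only [Finset.mem_range] at htm
    have hc : ((ℓ+1-t : ℕ):ℝ) = (ℓ:ℝ) + 1 - (t:ℝ) := by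
      have ht' : t ≤ ℓ + 1 := by omega
      push_cast [ht']
      ring
    rw [hc, pow_add]
    ring
  have hmul : ((k:ℝ) * p ^ ℓ / (ℓ:ℝ)) * ∑ t ∈ Finset.range (ℓ + 1),
        ((ℓ:ℝ) + 1 - (t:ℝ)) * (Nat.choose k t : ℝ) * p ^ t * (1 - p) ^ (k - t)
      = (1/(ℓ:ℝ)) * ∑ t ∈ range (ℓ+1), ((ℓ+1-t : ℕ):ℝ) * k * k.choose t * p^(ℓ+t) * (1-p)^(k-t) := by
    rw [Finset.mul_sum, Finset.mul_sum]
    exact Finset.sum_congr rfl hcast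
  have hconj1 : ((k:ℝ) * p ^ ℓ / (ℓ:ℝ)) * ∑ t ∈ Finset.range (ℓ + 1),
        ((ℓ:ℝ) + 1 - (t:ℝ)) * (Nat.choose k t : ℝ) * p ^ t * (1 - p) ^ (k - t) < 1 := by
    rw [hmul]
    calc (1/(ℓ:ℝ)) * ∑ t ∈ range (ℓ+1), ((ℓ+1-t : ℕ):ℝ) * k * k.choose t * p^(ℓ+t) * (1-p)^(k-t)
        < (1/(ℓ:ℝ)) * ℓ := by
          apply mul_lt_mul_of_pos_left hsum (by positivity)
      _ = 1 := by field_simp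
  refine ⟨hconj1, ?_⟩
  -- second conjunct
  have hU : Ufun k ℓ p (ℓ+1) = ((ℓ:ℝ)+1) - ((k:ℝ)/(ℓ:ℝ)) * ∑ t ∈ range (ℓ+1),
      ((ℓ:ℝ) + 1 - (t:ℝ)) * (Nat.choose k t : ℝ) * p ^ (ℓ+t) * (1 - p) ^ (k - t) := by
    rw [Ufun, Finset.sum_range_succ]
    push_cast
    rw [show ((ℓ:ℝ) + 1 - ((ℓ:ℝ) + 1)) = 0 by ring]
    rw [zero_mul, zero_mul, zero_mul, add_zero]
  have hfac : ((k:ℝ)/(ℓ:ℝ)) * ∑ t ∈ range (ℓ+1),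
      ((ℓ:ℝ) + 1 - (t:ℝ)) * (Nat.choose k t : ℝ) * p ^ (ℓ+t) * (1 - p) ^ (k - t)
      = ((k:ℝ) * p ^ ℓ / (ℓ:ℝ)) * ∑ t ∈ Finset.range (ℓ + 1),
        ((ℓ:ℝ) + 1 - (t:ℝ)) * (Nat.choose k t : ℝ) * p ^ t * (1 - p) ^ (k - t) := by
    rw [Finset.mul_sum, Finset.mul_sum]
    apply Finset.sum_congr rfl
    intro t htm
    rw [pow_add]
    ring
  rw [hU, hfac]
  linarith [hconj1]
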